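/- (Riemann invariant of the interfacial wave: mixture total pressure) The quantity φ = α₁p₁ + α₂p₂ + ρY₁Y₂W² is a Riemann invariant of the interfacial wave: its gradient with respect to the variables V = (α₁, u₁, p₁, m₁, u₂, p₂, m₂) is orthogonal to the interfacial eigenvector r; explicitly, (p₁ − p₂)·1 + 2ρY₁Y₂W·r_{u₁} + α₁·r_{p₁} + Y₂²W²·r_{m₁} − 2ρY₁Y₂W·r_{u₂} + α₂·r_{p₂} + Y₁²W²·r_{m₂} = 0. -/

import Mathlib

/-- (Riemann invariant of the interfacial wave: mixture total pressure) The gradient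
of `φ = α₁p₁ + α₂p₂ + ρY₁Y₂W²` with respect to the variables
`V = (α₁, u₁, p₁, m₁, u₂, p₂, m₂)` is orthogonal to the interfacial eigenvector `r`. -/
theorem riemann_invariant_mixture_total_pressure
    (α₁ ρ₁ ρ₂ c₁ c₂ u₁ u₂ p₁ p₂ : ℝ)
    (hα₁ : 0 < α₁) (hα₁' : α₁ < 1)
    (hρ₁ : 0 < ρ₁) (hρ₂ : 0 < ρ₂) (hc₁ : 0 < c₁) (hc₂ : 0 < c₂)
    (α₂ m₁ m₂ ρ Y₁ Y₂ u W Δ₁ Δ₂ D A₁ A₂ : ℝ)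
    (hα₂ : α₂ = 1 - α₁) (hm₁ : m₁ = α₁ * ρ₁) (hm₂ : m₂ = α₂ * ρ₂)
    (hρ : ρ = m₁ + m₂) (hY₁ : Y₁ = m₁ / ρ) (hY₂ : Y₂ = m₂ / ρ)
    (hu : u = Y₁ * u₁ + Y₂ * u₂) (hW : W = u₁ - u₂)
    (hΔ₁ : Δ₁ = (u₁ - u) ^ 2 - c₁ ^ 2) (hΔ₂ : Δ₂ = (u₂ - u) ^ 2 - c₂ ^ 2)
    (hΔ₁0 : Δ₁ ≠ 0) (hΔ₂0 : Δ₂ ≠ 0)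
    (hD : D = (p₁ - p₂) / ρ) (hA₁ : A₁ = D - c₁ ^ 2 / α₁) (hA₂ : A₂ = D + c₂ ^ 2 / α₂)
    (ru₁ rp₁ rm₁ ru₂ rp₂ rm₂ : ℝ)
    (hru₁ : ru₁ = (-Y₂ * W / Δ₁) * A₁)
    (hrp₁ : rp₁ = (ρ₁ * c₁ ^ 2 / Δ₁) * (D - Y₂ ^ 2 * W ^ 2 / α₁))
    (hrm₁ : rm₁ = (ρ * Y₁ / Δ₁) * A₁)
    (hru₂ : ru₂ = (Y₁ * W / Δ₂) * A₂)
    (hrp₂ : rp₂ = (ρ₂ * c₂ ^ 2 / Δ₂) * (D + Y₁ ^ 2 * W ^ 2 / α₂))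
    (hrm₂ : rm₂ = (ρ * Y₂ / Δ₂) * A₂) :
    (p₁ - p₂) * 1 + 2 * ρ * Y₁ * Y₂ * W * ru₁ + α₁ * rp₁ + Y₂ ^ 2 * W ^ 2 * rm₁
      - 2 * ρ * Y₁ * Y₂ * W * ru₂ + α₂ * rp₂ + Y₁ ^ 2 * W ^ 2 * rm₂ = 0 := by
  have hα₁0 : α₁ ≠ 0 := ne_of_gt hα₁
  have hα₂0 : α₂ ≠ 0 := by rw [hα₂]; intro h; linarith [hα₁']
  have hρ0 : ρ ≠ 0 := by
    have : (0:ℝ) < ρ := by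
      rw [hρ, hm₁, hm₂, hα₂]
      have : (0:ℝ) < 1 - α₁ := by linarith
      positivity
    exact ne_of_gt this
  have hY : Y₁ + Y₂ = 1 := by
    rw [hY₁, hY₂, ← add_div, ← hρ, div_self hρ0]
  have hu₁' : u₁ - u = Y₂ * W := by
    rw [hu, hW]; linear_combination (-u₁) * hY
  have hu₂' : u₂ - u = -(Y₁ * W) := by
    rw [hu, hW]; linear_combination (-u₂) * hY
  have hΔ₁' : Δ₁ = Y₂ ^ 2 * W ^ 2 - c₁ ^ 2 := by rw [hΔ₁, hu₁']; ring
  have hΔ₂' : Δ₂ = Y₁ ^ 2 * W ^ 2 - c₂ ^ 2 := by rw [hΔ₂, hu₂']; ring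
  have hρ₁' : α₁ * ρ₁ = ρ * Y₁ := by rw [hY₁, hm₁]; field_simp
  have hρ₂' : α₂ * ρ₂ = ρ * Y₂ := by rw [hY₂, hm₂]; field_simp
  have hDρ : ρ * D = p₁ - p₂ := by rw [hD]; field_simp
  have hru₁' : ru₁ * (Δ₁ * α₁) = -Y₂ * W * (D * α₁ - c₁ ^ 2) := by
    rw [hru₁, hA₁]; field_simp
  have hrp₁' : rp₁ * (Δ₁ * α₁) = ρ₁ * c₁ ^ 2 * (D * α₁ - Y₂ ^ 2 * W ^ 2) := by
    rw [hrp₁]; field_simp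
  have hrm₁' : rm₁ * (Δ₁ * α₁) = ρ * Y₁ * (D * α₁ - c₁ ^ 2) := by
    rw [hrm₁, hA₁]; field_simp
  have hru₂' : ru₂ * (Δ₂ * α₂) = Y₁ * W * (D * α₂ + c₂ ^ 2) := by
    rw [hru₂, hA₂]; field_simp
  have hrp₂' : rp₂ * (Δ₂ * α₂) = ρ₂ * c₂ ^ 2 * (D * α₂ + Y₁ ^ 2 * W ^ 2) := by
    rw [hrp₂]; field_simp
  have hrm₂' : rm₂ * (Δ₂ * α₂) = ρ * Y₂ * (D * α₂ + c₂ ^ 2) := by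
    rw [hrm₂, hA₂]; field_simp
  have h1 : 2 * ρ * Y₁ * Y₂ * W * ru₁ + α₁ * rp₁ + Y₂ ^ 2 * W ^ 2 * rm₁ = -(ρ * Y₁ * D) := by
    apply mul_right_cancel₀ (mul_ne_zero hΔ₁0 hα₁0)
    linear_combination (2 * ρ * Y₁ * Y₂ * W) * hru₁' + α₁ * hrp₁' + (Y₂ ^ 2 * W ^ 2) * hrm₁'
      + (c₁ ^ 2 * (D * α₁ - Y₂ ^ 2 * W ^ 2)) * hρ₁' + (ρ * Y₁ * D * α₁) * hΔ₁'
  have h2 : -(2 * ρ * Y₁ * Y₂ * W * ru₂) + α₂ * rp₂ + Y₁ ^ 2 * W ^ 2 * rm₂ = -(ρ * Y₂ * D) := by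
    apply mul_right_cancel₀ (mul_ne_zero hΔ₂0 hα₂0)
    linear_combination (-(2 * ρ * Y₁ * Y₂ * W)) * hru₂' + α₂ * hrp₂' + (Y₁ ^ 2 * W ^ 2) * hrm₂'
      + (c₂ ^ 2 * (D * α₂ + Y₁ ^ 2 * W ^ 2)) * hρ₂' + (ρ * Y₂ * D * α₂) * hΔ₂'
  linear_combination h1 + h2 - ρ * D * hY - hDρ
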